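/- Let M be an SNP matrix and H' a haplotype such that (H', H₂) ∈ OptPairs(M) for some H₂. Then OptPairs(M ∪ {H'}) = OptPairs(M, H'), where OptPairs(M, H') is the set of optimal pairs of M having H' as one component. -/
import Mathlib


open Finset

/-- A row of an SNP matrix: entries in {0,1,-} (`none` is a hole). -/
abbrev Row (m : ℕ) := Fin m → Option Bool

/-- A haplotype: a hole-free binary string. -/
abbrev Hap (m : ℕ) := Fin m → Bool

/-- `dist r H`: the number of positions where `r` has a non-hole value differing from `H`. -/
def dist {m : ℕ} (r : Row m) (H : Hap m) : ℕ :=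
  (univ.filter (fun j => r j ≠ none ∧ r j ≠ some (H j))).card

/-- `DM M H₁ H₂ = Σ over rows r of M of min(d(r,H₁), d(r,H₂))`. -/
def DM {m : ℕ} (M : Multiset (Row m)) (H1 H2 : Hap m) : ℕ :=
  (M.map (fun r => min (dist r H1) (dist r H2))).sum

/-- MEC(M): the minimum of `DM M H₁ H₂` over all haplotype pairs. -/
noncomputable def MEC {m : ℕ} (M : Multiset (Row m)) : ℕ :=
  sInf {v : ℕ | ∃ H1 H2 : Hap m, DM M H1 H2 = v}

/-- The set of optimal haplotype pairs for `M`. -/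
def OptPairs {m : ℕ} (M : Multiset (Row m)) : Set (Hap m × Hap m) :=
  {p | DM M p.1 p.2 = MEC M}


lemma MEC_le {m : ℕ} (M : Multiset (Row m)) (H1 H2 : Hap m) : MEC M ≤ DM M H1 H2 :=
  Nat.sInf_le ⟨H1, H2, rfl⟩

lemma dist_some_eq_zero {m : ℕ} (H' H : Hap m) :
    dist (fun j => some (H' j)) H = 0 ↔ H' = H := by
  unfold _root_.dist
  simp [Finset.card_eq_zero, Finset.filter_eq_empty_iff, funext_iff]

lemma DM_cons {m : ℕ} (r : Row m) (M : Multiset (Row m)) (H1 H2 : Hap m) :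
    DM (r ::ₘ M) H1 H2 = min (dist r H1) (dist r H2) + DM M H1 H2 := by
  simp [DM]

/-- ANCHORED-DFN correctness: if `H'` occurs in some optimal pair of `M`, then the optimal
pairs of `M` with row `H'` appended are exactly the optimal pairs of `M` containing `H'`. -/
theorem OptPairs_append_anchor {m : ℕ} (M : Multiset (Row m)) (H' : Hap m)
    (hopt : ∃ H2 : Hap m, (H', H2) ∈ OptPairs M) :
    OptPairs ((fun j => some (H' j)) ::ₘ M)
      = {p ∈ OptPairs M | p.1 = H' ∨ p.2 = H'} := by
  obtain ⟨H2, h2⟩ := hopt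
  have h2' : DM M H' H2 = MEC M := h2
  set r : Row m := (fun j => some (H' j)) with hr
  have hdr : dist r H' = 0 := (dist_some_eq_zero H' H').mpr rfl
  have hMEC : MEC (r ::ₘ M) = MEC M := by
    apply le_antisymm
    · have hq : DM (r ::ₘ M) H' H2 = MEC M := by
        rw [DM_cons, hdr, h2']; simp
      calc MEC (r ::ₘ M) ≤ DM (r ::ₘ M) H' H2 := Nat.sInf_le ⟨H', H2, rfl⟩
        _ = MEC M := hq
    · refine le_csInf ⟨DM (r ::ₘ M) H' H2, H', H2, rfl⟩ ?_
      rintro b ⟨A, B, rfl⟩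
      calc MEC M ≤ DM M A B := MEC_le M A B
        _ ≤ DM (r ::ₘ M) A B := by rw [DM_cons]; omega
  ext p
  have hle := MEC_le M p.1 p.2
  simp only [OptPairs, Set.mem_setOf_eq, Set.mem_sep_iff, hMEC, DM_cons]
  constructor
  · intro h
    have hmin : min (dist r p.1) (dist r p.2) = 0 := by omega
    have hDM : DM M p.1 p.2 = MEC M := by omega
    refine ⟨hDM, ?_⟩
    rcases Nat.min_eq_zero_iff.mp hmin with h0 | h0
    · exact Or.inl ((dist_some_eq_zero H' p.1).mp h0).symm
    · exact Or.inr ((dist_some_eq_zero H' p.2).mp h0).symm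
  · rintro ⟨hDM, h0 | h0⟩
    · have : dist r p.1 = 0 := (dist_some_eq_zero H' p.1).mpr h0.symm
      omega
    · have : dist r p.2 = 0 := (dist_some_eq_zero H' p.2).mpr h0.symm
      omega
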